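/- Let R be the free associative algebra K⟨x_1,…,x_m⟩ over a field K (or more generally any K-algebra), and let M and N be R-modules with dim_K M = dim_K N finite. Assume that M or N has Jordan–Hölder composition length at most 2, and that for every submodule X of M one has dim_K Hom_R(X, M) ≤ dim_K Hom_R(X, N). Then either M ≅ N, or M has Jordan–Hölder composition length exactly 2 and, denoting by S and T the composition factors of M (S ≅ T allowed), N ≅ S ⊕ T. -/

import Mathlib

/-- A module has Jordan–Hölder composition length at most `2` iff it has a submodule
such that both the submodule and the quotient are simple or zero. -/
def lengthLE2 (R M : Type*) [Ring R] [AddCommGroup M] [Module R M] : Prop :=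
  ∃ X : Submodule R M, (IsSimpleModule R X ∨ Subsingleton X) ∧
    (IsSimpleModule R (M ⧸ X) ∨ Subsingleton (M ⧸ X))



set_option linter.unusedSectionVars false
set_option linter.unusedVariables false

open Module LinearMap

section Aux

variable {K R : Type*} [Field K] [Ring R] [Algebra K R]
variable {A B C : Type*}
  [AddCommGroup A] [Module K A] [Module R A] [IsScalarTower K R A] [SMulCommClass R K A]
  [AddCommGroup B] [Module K B] [Module R B] [IsScalarTower K R B] [SMulCommClass R K B]
  [AddCommGroup C] [Module K C] [Module R C] [IsScalarTower K R C] [SMulCommClass R K C]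

noncomputable instance auxFinDimSub [FiniteDimensional K A] (p : Submodule R A) :
    FiniteDimensional K ↥p :=
  FiniteDimensional.of_injective (p.subtype.restrictScalars K) Subtype.val_injective

noncomputable instance auxFinDimQuot [FiniteDimensional K A] (p : Submodule R A) :
    FiniteDimensional K (A ⧸ p) :=
  Module.Finite.of_surjective (p.mkQ.restrictScalars K) (Submodule.mkQ_surjective p)

noncomputable instance auxFinDimHom [FiniteDimensional K A] [FiniteDimensional K B] :
    FiniteDimensional K (A →ₗ[R] B) :=
  FiniteDimensional.of_injective (LinearMap.restrictScalarsₗ K R A B K)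
    (LinearMap.restrictScalars_injective K)

/-- Precomposition with an `R`-linear equivalence, as a `K`-linear equivalence of hom spaces. -/
def auxCongrLeft (e : A ≃ₗ[R] B) : (B →ₗ[R] C) ≃ₗ[K] (A →ₗ[R] C) where
  toFun f := f.comp e.toLinearMap
  invFun g := g.comp e.symm.toLinearMap
  map_add' f g := by ext x; simp
  map_smul' c f := by ext x; simp
  left_inv f := by ext x; simp
  right_inv g := by ext x; simp

/-- Postcomposition with an `R`-linear equivalence, as a `K`-linear equivalence of hom spaces. -/
def auxCongrRight (e : B ≃ₗ[R] C) : (A →ₗ[R] B) ≃ₗ[K] (A →ₗ[R] C) where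
  toFun f := e.toLinearMap.comp f
  invFun g := e.symm.toLinearMap.comp g
  map_add' f g := by ext x; simp
  map_smul' c f := by
    ext x
    exact e.toLinearMap.map_smul_of_tower c (f x)
  left_inv f := by ext x; simp
  right_inv g := by ext x; simp

lemma aux_frk_eq (e : A ≃ₗ[R] B) : finrank K A = finrank K B :=
  LinearEquiv.finrank_eq (e.restrictScalars K)

variable (K)

lemma aux_finrank_lt_of_lt [FiniteDimensional K A] {p q : Submodule R A} (h : p < q) :
    finrank K ↥p < finrank K ↥q :=
  Submodule.finrank_lt_finrank_of_lt (show p.restrictScalars K < q.restrictScalars K from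
    ⟨fun x hx => h.1 hx, fun hh => h.2 (fun x hx => hh hx)⟩)

lemma aux_eq_top_of_finrank [FiniteDimensional K A] {p : Submodule R A}
    (h : finrank K ↥p = finrank K A) : p = ⊤ := by
  have := Submodule.eq_top_of_finrank_eq (S := p.restrictScalars K) h
  rwa [Submodule.restrictScalars_eq_top_iff] at this

lemma aux_eq_of_le_of_finrank [FiniteDimensional K A] {p q : Submodule R A} (hle : p ≤ q)
    (h : finrank K ↥p = finrank K ↥q) : p = q :=
  Submodule.restrictScalars_injective K _ _
    (Submodule.eq_of_le_of_finrank_eq (S₁ := p.restrictScalars K) (S₂ := q.restrictScalars K) hle h)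

lemma aux_rank_nullity [FiniteDimensional K A] (f : A →ₗ[R] B) :
    finrank K ↥(LinearMap.range f) + finrank K ↥(LinearMap.ker f) = finrank K A := by
  have h1 : LinearMap.range (f.restrictScalars K) = (LinearMap.range f).restrictScalars K := by
    ext x; rfl
  have h2 : LinearMap.ker (f.restrictScalars K) = (LinearMap.ker f).restrictScalars K := rfl
  have := LinearMap.finrank_range_add_finrank_ker (f.restrictScalars K)
  rw [h1, h2] at this
  exact this

lemma aux_frk_quot [FiniteDimensional K A] (p : Submodule R A) :
    finrank K (A ⧸ p) + finrank K ↥p = finrank K A := by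
  rw [← LinearEquiv.finrank_eq (Submodule.Quotient.restrictScalarsEquiv K p)]
  exact Submodule.finrank_quotient_add_finrank _

lemma aux_frk_bot_iff [FiniteDimensional K A] (p : Submodule R A) :
    finrank K ↥p = 0 ↔ p = ⊥ := by
  rw [show finrank K ↥p = finrank K ↥(p.restrictScalars K) from rfl,
    Submodule.finrank_eq_zero]
  exact ⟨fun h => Submodule.restrictScalars_injective K _ _ (by rw [h]; rfl),
    fun h => by rw [h]; rfl⟩

lemma aux_isCompl [FiniteDimensional K A] {p q : Submodule R A} (hd : Disjoint p q)
    (hsum : finrank K ↥p + finrank K ↥q = finrank K A) : IsCompl p q := by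
  have hsup : (p ⊔ q).restrictScalars K = p.restrictScalars K ⊔ q.restrictScalars K := by
    apply le_antisymm
    · intro x hx
      rw [Submodule.restrictScalars_mem] at hx
      rcases Submodule.mem_sup.1 hx with ⟨y, hy, z, hz, rfl⟩
      exact Submodule.add_mem_sup hy hz
    · refine sup_le ?_ ?_ <;> intro x hx <;> rw [Submodule.restrictScalars_mem] at hx ⊢
      · exact Submodule.mem_sup_left hx
      · exact Submodule.mem_sup_right hx
  have hdK : Disjoint (p.restrictScalars K) (q.restrictScalars K) := by
    rw [disjoint_iff] at hd ⊢
    have h0 : (p ⊓ q).restrictScalars K = p.restrictScalars K ⊓ q.restrictScalars K := rfl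
    rw [← h0, hd]; rfl
  have h2 : finrank K ↥(p.restrictScalars K ⊔ q.restrictScalars K) = finrank K A := by
    have h3 := Submodule.finrank_sup_add_finrank_inf_eq (p.restrictScalars K) (q.restrictScalars K)
    rw [hdK.eq_bot] at h3
    simp only [finrank_bot, add_zero] at h3
    rw [h3]; exact hsum
  refine ⟨hd, codisjoint_iff.2 ?_⟩
  have := Submodule.eq_top_of_finrank_eq (S := (p ⊔ q).restrictScalars K) (by rw [hsup]; exact h2)
  rwa [Submodule.restrictScalars_eq_top_iff] at this

lemma aux_restrict_sup (p q : Submodule R A) :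
    (p ⊔ q).restrictScalars K = p.restrictScalars K ⊔ q.restrictScalars K := by
  apply le_antisymm
  · intro x hx
    rw [Submodule.restrictScalars_mem] at hx
    rcases Submodule.mem_sup.1 hx with ⟨y, hy, z, hz, rfl⟩
    exact Submodule.add_mem_sup hy hz
  · refine sup_le ?_ ?_ <;> intro x hx <;> rw [Submodule.restrictScalars_mem] at hx ⊢
    · exact Submodule.mem_sup_left hx
    · exact Submodule.mem_sup_right hx

lemma aux_frk_compl [FiniteDimensional K A] {p q : Submodule R A} (h : IsCompl p q) :
    finrank K ↥p + finrank K ↥q = finrank K A := by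
  have h3 := Submodule.finrank_sup_add_finrank_inf_eq (p.restrictScalars K) (q.restrictScalars K)
  have hdK : Disjoint (p.restrictScalars K) (q.restrictScalars K) := by
    rw [disjoint_iff]
    have h0 : (p ⊓ q).restrictScalars K = p.restrictScalars K ⊓ q.restrictScalars K := rfl
    rw [← h0, h.inf_eq_bot]; rfl
  rw [hdK.eq_bot] at h3
  simp only [finrank_bot, add_zero] at h3
  rw [show (finrank K ↥p = finrank K ↥(p.restrictScalars K)) from rfl,
    show (finrank K ↥q = finrank K ↥(q.restrictScalars K)) from rfl, ← h3,
    ← aux_restrict_sup K, h.sup_eq_top]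
  have : (⊤ : Submodule R A).restrictScalars K = ⊤ := rfl
  rw [this, finrank_top]

variable {K}

lemma aux_bij [FiniteDimensional K A] [FiniteDimensional K B] {f : A →ₗ[R] B}
    (hinj : Function.Injective f) (h : finrank K A = finrank K B) : Function.Bijective f := by
  refine ⟨hinj, ?_⟩
  rw [← LinearMap.range_eq_top (f := f), ← aux_eq_top_of_finrank K (p := LinearMap.range f) ?_]
  have := aux_rank_nullity K (B := B) f
  rw [LinearMap.ker_eq_bot.2 hinj, (aux_frk_bot_iff K (⊥ : Submodule R A)).2 rfl] at this
  omega

lemma aux_inj_of_surj [FiniteDimensional K A] [FiniteDimensional K B] {f : A →ₗ[R] B}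
    (hsurj : LinearMap.range f = ⊤) (h : finrank K A = finrank K B) : Function.Injective f := by
  rw [← LinearMap.ker_eq_bot (f := f), ← aux_frk_bot_iff K]
  have := aux_rank_nullity K (B := B) f
  rw [hsurj] at this
  have htop : finrank K ↥(⊤ : Submodule R B) = finrank K B :=
    LinearEquiv.finrank_eq (Submodule.topEquiv)
  omega

lemma aux_simple_inj [IsSimpleModule R A] {f : A →ₗ[R] B} (h : f ≠ 0) : Function.Injective f := by
  rw [← LinearMap.ker_eq_bot (f := f)]
  rcases eq_bot_or_eq_top (LinearMap.ker f) with h1 | h1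
  · exact h1
  · exact absurd (LinearMap.ker_eq_top.1 h1) h

lemma aux_range_simple [IsSimpleModule R A] {f : A →ₗ[R] B} (h : f ≠ 0) :
    IsSimpleModule R ↥(LinearMap.range f) :=
  IsSimpleModule.congr (LinearEquiv.ofInjective f (aux_simple_inj h)).symm

lemma aux_atom_disjoint {p q : Submodule R A} (hp : IsAtom p) (hq : IsAtom q) (h : p ≠ q) :
    Disjoint p q := by
  rcases hp.le_iff.1 (inf_le_left (a := p) (b := q)) with h1 | h1
  · exact disjoint_iff.2 h1
  · have hpq : p ≤ q := inf_eq_left.1 h1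
    rcases lt_or_eq_of_le hpq with h2 | h2
    · exact absurd (hq.2 p h2) hp.1
    · exact absurd h2 h

/-- If every map `A →ₗ[R] B` has range inside `Z`, the hom space is equivalent to `A →ₗ[R] Z`. -/
def auxHomInto (Z : Submodule R B) (hall : ∀ f : A →ₗ[R] B, LinearMap.range f ≤ Z) :
    (A →ₗ[R] B) ≃ₗ[K] (A →ₗ[R] ↥Z) where
  toFun f := LinearMap.codRestrict Z f (fun x => hall f ⟨x, rfl⟩)
  invFun g := Z.subtype.comp g
  map_add' f g := by ext x; rfl
  map_smul' c f := by ext x; rfl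
  left_inv f := by ext x; rfl
  right_inv g := by ext x; rfl


section TwoModules

variable {M N : Type*}
  [AddCommGroup M] [Module K M] [Module R M] [IsScalarTower K R M] [SMulCommClass R K M]
  [AddCommGroup N] [Module K N] [Module R N] [IsScalarTower K R N] [SMulCommClass R K N]
  [FiniteDimensional K M] [FiniteDimensional K N]

/-- The master contradiction lemma: if every `f : M → N` has range inside `Z`, and `Z` is
isomorphic to a proper submodule `W` of `M`, then `dim Hom(M,M) > dim Hom(M,N)`. -/
lemma aux_L3 (hhomTop : finrank K (M →ₗ[R] M) ≤ finrank K (M →ₗ[R] N))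
    (Z : Submodule R N) (W : Submodule R M) (e : ↥Z ≃ₗ[R] ↥W) (hW : W ≠ ⊤)
    (hall : ∀ f : M →ₗ[R] N, LinearMap.range f ≤ Z) : False := by
  classical
  set j : ↥Z →ₗ[R] M := W.subtype.comp e.toLinearMap with hj
  have hjinj : Function.Injective j := Subtype.val_injective.comp e.injective
  have hjran : ∀ z, j z ∈ W := fun z => (e z).2
  let Ψ : (M →ₗ[R] ↥Z) →ₗ[K] (M →ₗ[R] M) :=
    { toFun := fun g => j.comp g
      map_add' := fun g₁ g₂ => by ext x; simp
      map_smul' := fun c g => by ext x; exact j.map_smul_of_tower c (g x) }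
  set Φ : (M →ₗ[R] N) →ₗ[K] (M →ₗ[R] M) :=
    Ψ.comp (auxHomInto (K := K) Z hall).toLinearMap with hΦ
  have hΦinj : Function.Injective Φ := by
    apply Function.Injective.comp (g := Ψ)
    · intro g₁ g₂ hg
      ext x
      exact congrArg Subtype.val (hjinj (LinearMap.congr_fun hg x))
    · exact (auxHomInto (K := K) Z hall).injective
  have hΦran : ∀ f, Φ f ≠ LinearMap.id := by
    intro f hf
    apply hW
    rw [eq_top_iff]
    intro x _
    have : Φ f x = x := by rw [hf]; rfl
    rw [← this]
    exact hjran _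
  have h1 : finrank K ↥(LinearMap.range Φ) = finrank K (M →ₗ[R] N) :=
    LinearMap.finrank_range_of_inj hΦinj
  have h2 : LinearMap.range Φ < ⊤ := by
    rcases lt_or_eq_of_le (le_top (a := LinearMap.range Φ)) with h | h
    · exact h
    · exfalso
      obtain ⟨f, hf⟩ := (LinearMap.range_eq_top (f := Φ)).1 h LinearMap.id
      exact hΦran f hf
  have h3 : finrank K ↥(LinearMap.range Φ) < finrank K (M →ₗ[R] M) :=
    Submodule.finrank_lt (ne_of_lt h2)
  omega

/-- From a `lengthLE2` witness, if the module has a proper nonzero submodule, then both the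
witness submodule and quotient are simple. -/
lemma aux_len2 (C : Submodule R M) (hC1 : C ≠ ⊥) (hC2 : C ≠ ⊤)
    (X : Submodule R M) (h1 : IsSimpleModule R ↥X ∨ Subsingleton ↥X)
    (h2 : IsSimpleModule R (M ⧸ X) ∨ Subsingleton (M ⧸ X)) :
    IsSimpleModule R ↥X ∧ IsSimpleModule R (M ⧸ X) := by
  have hns : ¬IsSimpleModule R M := by
    intro h
    rcases eq_bot_or_eq_top C with h | h
    · exact hC1 h
    · exact hC2 h
  have hnt : ¬Subsingleton M := by
    intro h
    exact hC1 (Subsingleton.elim _ _)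
  rcases h1 with h1 | h1
  · rcases h2 with h2 | h2
    · exact ⟨h1, h2⟩
    · exfalso
      have hXtop : X = ⊤ := Submodule.Quotient.subsingleton_iff.1 h2
      rw [hXtop] at h1
      exact hns (IsSimpleModule.congr Submodule.topEquiv.symm)
  · have hXbot : X = ⊥ := by
      rw [eq_bot_iff]
      intro x hx
      have := congrArg Subtype.val (Subsingleton.elim (⟨x, hx⟩ : ↥X) ⟨0, X.zero_mem⟩)
      simpa using this
    exfalso
    rcases h2 with h2 | h2
    · exact hns (IsSimpleModule.congr (Submodule.quotEquivOfEqBot X hXbot).symm)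
    · exact hnt (Equiv.subsingleton (Submodule.quotEquivOfEqBot X hXbot).symm.toEquiv)

include K in
/-- In a module of length two, every proper nonzero submodule is simple with simple quotient. -/
lemma aux_len2_struct (X : Submodule R M) (hXs : IsSimpleModule R ↥X)
    (hXq : IsSimpleModule R (M ⧸ X)) (Z : Submodule R M) (hZ1 : Z ≠ ⊥) (hZ2 : Z ≠ ⊤) :
    IsSimpleModule R ↥Z ∧ IsSimpleModule R (M ⧸ Z) := by
  have hXatom : IsAtom X := isSimpleModule_iff_isAtom.1 hXs
  rcases hXatom.le_iff.1 (inf_le_left (a := X) (b := Z)) with hinf | hinf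
  · -- X ⊓ Z = ⊥ : Z ≅ M⧸X and M⧸Z ≅ X
    let g : ↥Z →ₗ[R] M ⧸ X := X.mkQ.comp Z.subtype
    have hginj : Function.Injective g := by
      rw [← LinearMap.ker_eq_bot (f := g), LinearMap.ker_eq_bot']
      intro z hz
      have hzX : (z : M) ∈ X := (Submodule.Quotient.mk_eq_zero X).1 hz
      have : (z : M) ∈ X ⊓ Z := ⟨hzX, z.2⟩
      rw [hinf] at this
      exact Subtype.ext this
    have hg0 : g ≠ 0 := by
      intro h0
      apply hZ1
      rw [eq_bot_iff]
      intro z hz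
      have : g ⟨z, hz⟩ = 0 := by rw [h0]; rfl
      have hzX : z ∈ X := (Submodule.Quotient.mk_eq_zero X).1 this
      have : z ∈ X ⊓ Z := ⟨hzX, hz⟩
      rw [hinf] at this
      exact this
    have hgsur : LinearMap.range g = ⊤ := by
      rcases eq_bot_or_eq_top (LinearMap.range g) with h | h
      · exact absurd (LinearMap.range_eq_bot.1 h) hg0
      · exact h
    have e1 : ↥Z ≃ₗ[R] M ⧸ X :=
      LinearEquiv.ofBijective g ⟨hginj, LinearMap.range_eq_top.1 hgsur⟩
    have hZsimp : IsSimpleModule R ↥Z := IsSimpleModule.congr e1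
    -- now M ⧸ Z ≅ X
    let g' : ↥X →ₗ[R] M ⧸ Z := Z.mkQ.comp X.subtype
    have hg'inj : Function.Injective g' := by
      rw [← LinearMap.ker_eq_bot (f := g'), LinearMap.ker_eq_bot']
      intro x hx
      have hxZ : (x : M) ∈ Z := (Submodule.Quotient.mk_eq_zero Z).1 hx
      have : (x : M) ∈ X ⊓ Z := ⟨x.2, hxZ⟩
      rw [hinf] at this
      exact Subtype.ext this
    have hdim1 : finrank K ↥Z = finrank K (M ⧸ X) := aux_frk_eq e1
    have hq1 := aux_frk_quot K (A := M) X
    have hq2 := aux_frk_quot K (A := M) Z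
    have hdim2 : finrank K ↥X = finrank K (M ⧸ Z) := by omega
    have e2 : ↥X ≃ₗ[R] M ⧸ Z := LinearEquiv.ofBijective g' (aux_bij hg'inj hdim2)
    exact ⟨hZsimp, IsSimpleModule.congr e2.symm⟩
  · -- X ≤ Z : then Z = X
    have hXZ : X ≤ Z := inf_eq_left.1 hinf
    have hZX : Z = X := by
      rcases eq_bot_or_eq_top (Z.map X.mkQ) with h | h
      · apply le_antisymm _ hXZ
        intro z hz
        have : X.mkQ z ∈ Z.map X.mkQ := Submodule.mem_map_of_mem hz
        rw [h] at this
        exact (Submodule.Quotient.mk_eq_zero X).1 this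
      · exfalso
        apply hZ2
        have := Submodule.comap_map_mkQ X Z
        rw [h, Submodule.comap_top] at this
        rw [← sup_eq_right.2 hXZ, this]
    rw [hZX]
    exact ⟨hXs, hXq⟩

end TwoModules

end Aux


set_option maxHeartbeats 1000000 in
theorem module_two_composition_factors {K R M N : Type*} [Field K] [Ring R] [Algebra K R]
    [AddCommGroup M] [Module K M] [Module R M] [IsScalarTower K R M] [SMulCommClass R K M]
    [AddCommGroup N] [Module K N] [Module R N] [IsScalarTower K R N] [SMulCommClass R K N]
    [FiniteDimensional K M] [FiniteDimensional K N]
    (hdim : Module.finrank K M = Module.finrank K N)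
    (hlen : lengthLE2 R M ∨ lengthLE2 R N)
    (hhom : ∀ X : Submodule R M,
      Module.finrank K (X →ₗ[R] M) ≤ Module.finrank K (X →ₗ[R] N)) :
    Nonempty (M ≃ₗ[R] N) ∨
      ∃ S : Submodule R M, IsSimpleModule R S ∧ IsSimpleModule R (M ⧸ S) ∧
        Nonempty (N ≃ₗ[R] (S × (M ⧸ S))) := by
  classical
  -- trivial case
  by_cases htriv : Subsingleton M
  · left
    have h0 : finrank K M = 0 := Module.finrank_zero_of_subsingleton
    have h1 : finrank K N = 0 := by omega
    haveI : Subsingleton N := Module.finrank_zero_iff.1 h1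
    exact ⟨{ toFun := fun _ => 0, invFun := fun _ => 0,
             map_add' := by intros; simp, map_smul' := by intros; simp,
             left_inv := fun x => Subsingleton.elim _ _,
             right_inv := fun x => Subsingleton.elim _ _ }⟩
  haveI hMnt : Nontrivial M := not_subsingleton_iff_nontrivial.mp htriv
  haveI hNnt : Nontrivial N := by
    rw [← Module.finrank_pos_iff (R := K), ← hdim]
    exact Module.finrank_pos_iff.mpr hMnt
  haveI hatomic : IsAtomic (Submodule R M) :=
    isAtomic_of_orderBot_wellFounded_lt (isArtinian_of_tower K inferInstance : IsArtinian R M).wf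
  have hhomTop : finrank K (M →ₗ[R] M) ≤ finrank K (M →ₗ[R] N) := by
    calc finrank K (M →ₗ[R] M)
        = finrank K (↥(⊤ : Submodule R M) →ₗ[R] M) :=
          LinearEquiv.finrank_eq (auxCongrLeft (K := K) Submodule.topEquiv)
      _ ≤ finrank K (↥(⊤ : Submodule R M) →ₗ[R] N) := hhom ⊤
      _ = finrank K (M →ₗ[R] N) :=
          (LinearEquiv.finrank_eq (auxCongrLeft (K := K) Submodule.topEquiv)).symm
  -- nonzero homs into N from nonzero submodules of M
  have hNonzeroHom : ∀ X : Submodule R M, X ≠ ⊥ → ∃ g : ↥X →ₗ[R] N, g ≠ 0 := by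
    intro X hX
    obtain ⟨x, hxX, hx0⟩ := Submodule.exists_mem_ne_zero_of_ne_bot hX
    have hsub : (X.subtype : ↥X →ₗ[R] M) ≠ 0 := by
      intro h0
      apply hx0
      have : X.subtype ⟨x, hxX⟩ = 0 := by rw [h0]; rfl
      simpa using this
    haveI : Nontrivial (↥X →ₗ[R] M) := ⟨⟨X.subtype, 0, hsub⟩⟩
    have hpos : 0 < finrank K (↥X →ₗ[R] N) :=
      lt_of_lt_of_le (Module.finrank_pos_iff.mpr inferInstance) (hhom X)
    haveI : Nontrivial (↥X →ₗ[R] N) := Module.finrank_pos_iff.1 hpos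
    obtain ⟨g, hg⟩ := exists_ne (0 : ↥X →ₗ[R] N)
    exact ⟨g, hg⟩
  have htopbot : (⊤ : Submodule R M) ≠ ⊥ := by
    intro h
    obtain ⟨x, y, hxy⟩ := hMnt
    have hx : x ∈ (⊥ : Submodule R M) := h ▸ Submodule.mem_top
    have hy : y ∈ (⊥ : Submodule R M) := h ▸ Submodule.mem_top
    rw [Submodule.mem_bot] at hx hy
    exact hxy (hx.trans hy.symm)
  obtain ⟨g₀, hg₀⟩ := hNonzeroHom ⊤ htopbot
  set f₀ : M →ₗ[R] N := g₀.comp (Submodule.topEquiv.symm : M ≃ₗ[R] ↥(⊤ : Submodule R M)).toLinearMap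
    with hf₀def
  have hf₀ : f₀ ≠ 0 := by
    intro h0
    apply hg₀
    ext x
    have : f₀ (x : M) = 0 := by rw [h0]; rfl
    exact this
  -- main dichotomy: injective map or not
  by_cases hinj : ∃ f : M →ₗ[R] N, Function.Injective f
  · obtain ⟨f, hf⟩ := hinj
    exact Or.inl ⟨LinearEquiv.ofBijective f (aux_bij hf hdim)⟩
  push_neg at hinj
  have hprop : ∀ f : M →ₗ[R] N, f ≠ 0 →
      LinearMap.ker f ≠ ⊥ ∧ LinearMap.ker f ≠ ⊤ ∧
      LinearMap.range f ≠ ⊥ ∧ LinearMap.range f ≠ ⊤ := by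
    intro f hf
    exact ⟨fun h => hinj f (LinearMap.ker_eq_bot.1 h),
           fun h => hf (LinearMap.ker_eq_top.1 h),
           fun h => hf (LinearMap.range_eq_bot.1 h),
           fun h => hinj f (aux_inj_of_surj h hdim)⟩
  have hatom_ne_top : ∀ S : Submodule R M, IsAtom S → S ≠ ⊤ := by
    intro S hS htop
    have h1 := (hprop f₀ hf₀).1
    have h2 := (hprop f₀ hf₀).2.1
    apply h1
    apply hS.2
    rw [htop]
    exact lt_top_iff_ne_top.2 h2
  -- helper to finish with the right branch
  have finish2 : ∀ (S : Submodule R M) (A B : Submodule R N),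
      IsSimpleModule R ↥S → IsSimpleModule R (M ⧸ S) → IsCompl A B →
      (↥A ≃ₗ[R] ↥S) → (↥B ≃ₗ[R] (M ⧸ S)) →
      (Nonempty (M ≃ₗ[R] N) ∨
        ∃ S : Submodule R M, IsSimpleModule R S ∧ IsSimpleModule R (M ⧸ S) ∧
          Nonempty (N ≃ₗ[R] (S × (M ⧸ S)))) := by
    intro S A B hS hQ hc eA eB
    exact Or.inr ⟨S, hS, hQ,
      ⟨(Submodule.prodEquivOfIsCompl A B hc).symm.trans (eA.prodCongr eB)⟩⟩
  rcases hlen with hM2 | hN2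
  · -- CASE I : M has length ≤ 2
    obtain ⟨X, hX1, hX2⟩ := hM2
    obtain ⟨hXs, hXq⟩ := aux_len2 (LinearMap.ker f₀) (hprop f₀ hf₀).1 (hprop f₀ hf₀).2.1 X hX1 hX2
    have hF1 : ∀ Z : Submodule R M, Z ≠ ⊥ → Z ≠ ⊤ →
        IsSimpleModule R ↥Z ∧ IsSimpleModule R (M ⧸ Z) :=
      fun Z h1 h2 => aux_len2_struct (K := K) X hXs hXq Z h1 h2
    have hkerS : ∀ f : M →ₗ[R] N, f ≠ 0 →
        IsSimpleModule R ↥(LinearMap.ker f) ∧ IsSimpleModule R (M ⧸ LinearMap.ker f) :=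
      fun f hf => hF1 _ (hprop f hf).1 (hprop f hf).2.1
    have hranS : ∀ f : M →ₗ[R] N, f ≠ 0 → IsSimpleModule R ↥(LinearMap.range f) := by
      intro f hf
      haveI := (hkerS f hf).2
      exact IsSimpleModule.congr f.quotKerEquivRange.symm
    by_cases hK : ∀ f g : M →ₗ[R] N, f ≠ 0 → g ≠ 0 → LinearMap.ker f = LinearMap.ker g
    · -- I-R1b : all nonzero maps share the same kernel K0
      obtain ⟨hK0s, hK0q⟩ := hkerS f₀ hf₀
      obtain ⟨ψ, hψ0⟩ := hNonzeroHom (LinearMap.ker f₀) (hprop f₀ hf₀).1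
      haveI := hK0s
      have hψinj : Function.Injective ψ := aux_simple_inj hψ0
      have eψ : ↥(LinearMap.ker f₀) ≃ₗ[R] ↥(LinearMap.range ψ) := LinearEquiv.ofInjective ψ hψinj
      have hAsimple : IsSimpleModule R ↥(LinearMap.range ψ) := IsSimpleModule.congr eψ.symm
      have hAatom : IsAtom (LinearMap.range ψ) := isSimpleModule_iff_isAtom.1 hAsimple
      have eB0 : (M ⧸ LinearMap.ker f₀) ≃ₗ[R] ↥(LinearMap.range f₀) := f₀.quotKerEquivRange
      have hB0simple : IsSimpleModule R ↥(LinearMap.range f₀) := hranS f₀ hf₀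
      have hB0atom : IsAtom (LinearMap.range f₀) := isSimpleModule_iff_isAtom.1 hB0simple
      have hrn : finrank K ↥(LinearMap.range f₀) + finrank K ↥(LinearMap.ker f₀) = finrank K M :=
        aux_rank_nullity K f₀
      have hfrkA : finrank K ↥(LinearMap.range ψ) = finrank K ↥(LinearMap.ker f₀) :=
        (aux_frk_eq eψ).symm
      by_cases hAB : Disjoint (LinearMap.range ψ) (LinearMap.range f₀)
      · have hc : IsCompl (LinearMap.range ψ) (LinearMap.range f₀) :=
          aux_isCompl K hAB (by omega)
        exact finish2 (LinearMap.ker f₀) (LinearMap.range ψ) (LinearMap.range f₀)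
          hK0s hK0q hc eψ.symm eB0.symm
      · have hAeqB : LinearMap.range ψ = LinearMap.range f₀ := by
          by_contra hne
          exact hAB (aux_atom_disjoint hAatom hB0atom hne)
        have eψ' : ↥(LinearMap.ker f₀) ≃ₗ[R] ↥(LinearMap.range f₀) := by
          rw [← hAeqB]; exact eψ
        by_cases hall2 : ∀ u : M →ₗ[R] N, LinearMap.range u ≤ LinearMap.range f₀
        · exact (aux_L3 hhomTop (LinearMap.range f₀) (LinearMap.ker f₀) eψ'.symm
            (hprop f₀ hf₀).2.1 hall2).elim
        · push_neg at hall2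
          obtain ⟨f₁, hf₁⟩ := hall2
          have hf₁0 : f₁ ≠ 0 := by
            intro h
            rw [h] at hf₁
            exact hf₁ (by simp)
          have hker1 : LinearMap.ker f₁ = LinearMap.ker f₀ := hK f₁ f₀ hf₁0 hf₀
          have eB1 : (M ⧸ LinearMap.ker f₀) ≃ₗ[R] ↥(LinearMap.range f₁) := by
            rw [← hker1]; exact f₁.quotKerEquivRange
          have hB1simple : IsSimpleModule R ↥(LinearMap.range f₁) := hranS f₁ hf₁0
          have hB1atom : IsAtom (LinearMap.range f₁) := isSimpleModule_iff_isAtom.1 hB1simple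
          have hB1ne : LinearMap.range f₁ ≠ LinearMap.range f₀ := by
            intro h
            exact hf₁ (h ▸ le_refl _)
          have hd : Disjoint (LinearMap.range f₁) (LinearMap.range f₀) :=
            aux_atom_disjoint hB1atom hB0atom hB1ne
          have hfrkB1 : finrank K ↥(LinearMap.range f₁) + finrank K ↥(LinearMap.ker f₀) =
              finrank K M := by
            rw [← hker1]; exact aux_rank_nullity K f₁
          have hfrkB0A : finrank K ↥(LinearMap.range f₀) = finrank K ↥(LinearMap.ker f₀) := by
            rw [← hAeqB]; exact hfrkA
          have hc : IsCompl (LinearMap.range f₁) (LinearMap.range f₀) :=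
            aux_isCompl K hd (by omega)
          exact finish2 (LinearMap.ker f₀) (LinearMap.range f₀) (LinearMap.range f₁)
            hK0s hK0q hc.symm eψ'.symm eB1.symm
    · -- I-R1a : two maps with distinct kernels
      push_neg at hK
      obtain ⟨f, g, hf0, hg0, hfg⟩ := hK
      have hKfa : IsAtom (LinearMap.ker f) := isSimpleModule_iff_isAtom.1 (hkerS f hf0).1
      have hKga : IsAtom (LinearMap.ker g) := isSimpleModule_iff_isAtom.1 (hkerS g hg0).1
      have hdisjk : Disjoint (LinearMap.ker f) (LinearMap.ker g) :=
        aux_atom_disjoint hKfa hKga hfg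
      by_cases hr : LinearMap.range g = LinearMap.range f
      · -- common range B, distinct kernels : M ≅ B × B and then M ≅ N
        have hsupk : LinearMap.ker f ⊔ LinearMap.ker g = ⊤ := by
          by_contra hst
          have hsb : LinearMap.ker f ⊔ LinearMap.ker g ≠ ⊥ := by
            intro h
            exact (hprop f hf0).1 (le_bot_iff.1 (h ▸ le_sup_left))
          have hatom := isSimpleModule_iff_isAtom.1 (hF1 _ hsb hst).1
          have hlt : LinearMap.ker f < LinearMap.ker f ⊔ LinearMap.ker g := by
            rcases lt_or_eq_of_le (le_sup_left : LinearMap.ker f ≤ _) with h | h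
            · exact h
            · exfalso
              have hgle : LinearMap.ker g ≤ LinearMap.ker f := h ▸ le_sup_right
              rcases hKfa.le_iff.1 hgle with h2 | h2
              · exact (hprop g hg0).1 h2
              · exact hfg h2.symm
          exact (hprop f hf0).1 (hatom.2 _ hlt)
        have hck : IsCompl (LinearMap.ker f) (LinearMap.ker g) :=
          ⟨hdisjk, codisjoint_iff.2 hsupk⟩
        have e1 : ↥(LinearMap.ker f) ≃ₗ[R] ↥(LinearMap.range f) :=
          ((Submodule.quotientEquivOfIsCompl _ _ hck.symm).symm.trans
            g.quotKerEquivRange).trans (LinearEquiv.ofEq _ _ hr)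
        have e2 : ↥(LinearMap.ker g) ≃ₗ[R] ↥(LinearMap.range f) :=
          (Submodule.quotientEquivOfIsCompl _ _ hck).symm.trans f.quotKerEquivRange
        have Θ : M ≃ₗ[R] ↥(LinearMap.range f) × ↥(LinearMap.range f) :=
          (Submodule.prodEquivOfIsCompl _ _ hck).symm.trans (e1.prodCongr e2)
        haveI hBsimple : IsSimpleModule R ↥(LinearMap.range f) := hranS f hf0
        haveI hBnt : Nontrivial ↥(LinearMap.range f) := IsSimpleModule.nontrivial R _
        -- dimension count : 4e ≤ 2x
        have h4 : finrank K (M →ₗ[R] M) =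
            2 * (2 * finrank K (↥(LinearMap.range f) →ₗ[R] ↥(LinearMap.range f))) := by
          have s1 : finrank K (M →ₗ[R] M) =
              finrank K (M →ₗ[R] ↥(LinearMap.range f) × ↥(LinearMap.range f)) :=
            LinearEquiv.finrank_eq (auxCongrRight (K := K) Θ)
          have s2 : finrank K (M →ₗ[R] ↥(LinearMap.range f) × ↥(LinearMap.range f)) =
              finrank K ((M →ₗ[R] ↥(LinearMap.range f)) × (M →ₗ[R] ↥(LinearMap.range f))) :=
            (LinearEquiv.finrank_eq (LinearMap.prodEquiv K)).symm
          have s3 : finrank K (M →ₗ[R] ↥(LinearMap.range f)) =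
              finrank K (↥(LinearMap.range f) × ↥(LinearMap.range f) →ₗ[R]
                ↥(LinearMap.range f)) :=
            LinearEquiv.finrank_eq (auxCongrLeft (K := K) Θ.symm)
          have s4 : finrank K (↥(LinearMap.range f) × ↥(LinearMap.range f) →ₗ[R]
              ↥(LinearMap.range f)) =
              finrank K ((↥(LinearMap.range f) →ₗ[R] ↥(LinearMap.range f)) ×
                (↥(LinearMap.range f) →ₗ[R] ↥(LinearMap.range f))) :=
            (LinearEquiv.finrank_eq (LinearMap.coprodEquiv K)).symm
          rw [s1, s2, Module.finrank_prod, s3, s4, Module.finrank_prod]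
          ring
        have h2x : finrank K (M →ₗ[R] N) =
            2 * finrank K (↥(LinearMap.range f) →ₗ[R] N) := by
          have s1 : finrank K (M →ₗ[R] N) =
              finrank K (↥(LinearMap.range f) × ↥(LinearMap.range f) →ₗ[R] N) :=
            LinearEquiv.finrank_eq (auxCongrLeft (K := K) Θ.symm)
          have s2 : finrank K (↥(LinearMap.range f) × ↥(LinearMap.range f) →ₗ[R] N) =
              finrank K ((↥(LinearMap.range f) →ₗ[R] N) × (↥(LinearMap.range f) →ₗ[R] N)) :=
            (LinearEquiv.finrank_eq (LinearMap.coprodEquiv K)).symm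
          rw [s1, s2, Module.finrank_prod]
          ring
        have he1 : 1 ≤ finrank K (↥(LinearMap.range f) →ₗ[R] ↥(LinearMap.range f)) := by
          have hidne : (LinearMap.id : ↥(LinearMap.range f) →ₗ[R] ↥(LinearMap.range f)) ≠ 0 := by
            intro h
            obtain ⟨x, hx⟩ := exists_ne (0 : ↥(LinearMap.range f))
            apply hx
            have : LinearMap.id (R := R) x = 0 := by rw [h]; rfl
            simpa using this
          haveI : Nontrivial (↥(LinearMap.range f) →ₗ[R] ↥(LinearMap.range f)) :=
            ⟨⟨LinearMap.id, 0, hidne⟩⟩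
          exact Module.finrank_pos_iff.mpr inferInstance
        by_cases hallB : ∀ u : ↥(LinearMap.range f) →ₗ[R] N,
            LinearMap.range u ≤ LinearMap.range f
        · exfalso
          have hxe : finrank K (↥(LinearMap.range f) →ₗ[R] N) =
              finrank K (↥(LinearMap.range f) →ₗ[R] ↥(LinearMap.range f)) :=
            LinearEquiv.finrank_eq (auxHomInto (K := K) _ hallB)
          omega
        · push_neg at hallB
          obtain ⟨u, hu⟩ := hallB
          have hu0 : u ≠ 0 := by
            intro h
            rw [h] at hu
            exact hu (by simp)
          have huinj : Function.Injective u := aux_simple_inj hu0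
          have eAu : ↥(LinearMap.range f) ≃ₗ[R] ↥(LinearMap.range u) :=
            LinearEquiv.ofInjective u huinj
          have hAusimple : IsSimpleModule R ↥(LinearMap.range u) := IsSimpleModule.congr eAu.symm
          have hAuatom : IsAtom (LinearMap.range u) := isSimpleModule_iff_isAtom.1 hAusimple
          have hBatom : IsAtom (LinearMap.range f) := isSimpleModule_iff_isAtom.1 hBsimple
          have hAune : LinearMap.range u ≠ LinearMap.range f := by
            intro h
            exact hu (le_of_eq h)
          have hdAu : Disjoint (LinearMap.range u) (LinearMap.range f) :=
            aux_atom_disjoint hAuatom hBatom hAune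
          -- dims
          have d1 : finrank K ↥(LinearMap.range u) = finrank K ↥(LinearMap.range f) :=
            (aux_frk_eq eAu).symm
          have d2 : finrank K ↥(LinearMap.range f) + finrank K ↥(LinearMap.ker f) =
              finrank K M := aux_rank_nullity K f
          have d3 : finrank K ↥(LinearMap.ker f) = finrank K ↥(LinearMap.range f) :=
            aux_frk_eq e1
          have hcAu : IsCompl (LinearMap.range u) (LinearMap.range f) :=
            aux_isCompl K hdAu (by omega)
          exact Or.inl ⟨Θ.trans ((eAu.prodCongr (LinearEquiv.refl R _)).trans
            (Submodule.prodEquivOfIsCompl _ _ hcAu))⟩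
      · -- distinct ranges : f + g is injective, contradiction
        have hRfa : IsAtom (LinearMap.range f) := isSimpleModule_iff_isAtom.1 (hranS f hf0)
        have hRga : IsAtom (LinearMap.range g) := isSimpleModule_iff_isAtom.1 (hranS g hg0)
        have hdisjr : Disjoint (LinearMap.range g) (LinearMap.range f) :=
          aux_atom_disjoint hRga hRfa hr
        have hinj2 : Function.Injective (f + g) := by
          rw [← LinearMap.ker_eq_bot, LinearMap.ker_eq_bot']
          intro m hm
          have hm' : f m + g m = 0 := by simpa using hm
          have hfm : f m = -(g m) := eq_neg_of_add_eq_zero_left hm'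
          have hfR : f m ∈ LinearMap.range g ⊓ LinearMap.range f :=
            Submodule.mem_inf.2 ⟨by rw [hfm]; exact neg_mem ⟨m, rfl⟩, ⟨m, rfl⟩⟩
          rw [hdisjr.eq_bot] at hfR
          have hf0m : f m = 0 := hfR
          have hg0m : g m = 0 := by
            rw [hf0m] at hfm
            simpa using hfm.symm
          have hmk : m ∈ LinearMap.ker f ⊓ LinearMap.ker g :=
            Submodule.mem_inf.2 ⟨hf0m, hg0m⟩
          rw [hdisjk.eq_bot] at hmk
          exact hmk
        exact (hinj (f + g) hinj2).elim
  · -- CASE II : N has length ≤ 2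
    obtain ⟨Y, hY1, hY2⟩ := hN2
    obtain ⟨hYs, hYq⟩ := aux_len2 (LinearMap.range f₀) (hprop f₀ hf₀).2.2.1
      (hprop f₀ hf₀).2.2.2 Y hY1 hY2
    have hF1' : ∀ Z : Submodule R N, Z ≠ ⊥ → Z ≠ ⊤ → IsSimpleModule R ↥Z :=
      fun Z h1 h2 => (aux_len2_struct (K := K) Y hYs hYq Z h1 h2).1
    have hatomN : ∀ Z : Submodule R N, Z ≠ ⊥ → Z ≠ ⊤ → IsAtom Z :=
      fun Z h1 h2 => isSimpleModule_iff_isAtom.1 (hF1' Z h1 h2)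
    have hcomplN : ∀ Z Z' : Submodule R N, Z ≠ ⊥ → Z ≠ ⊤ → Z' ≠ ⊥ → Z' ≠ ⊤ → Z ≠ Z' →
        IsCompl Z Z' := by
      intro Z Z' h1 h2 h3 h4 h5
      have hZa := hatomN Z h1 h2
      have hZ'a := hatomN Z' h3 h4
      have hd := aux_atom_disjoint hZa hZ'a h5
      refine ⟨hd, codisjoint_iff.2 ?_⟩
      by_contra hst
      have hsb : Z ⊔ Z' ≠ ⊥ := by
        intro h
        exact h1 (le_bot_iff.1 (h ▸ le_sup_left))
      have hatom := hatomN _ hsb hst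
      have hlt : Z < Z ⊔ Z' := by
        rcases lt_or_eq_of_le (le_sup_left : Z ≤ Z ⊔ Z') with h | h
        · exact h
        · exfalso
          have hle : Z' ≤ Z := h ▸ le_sup_right
          rcases hZa.le_iff.1 hle with h2' | h2'
          · exact h3 h2'
          · exact h5 h2'.symm
      exact h1 (hatom.2 _ hlt)
    have hrangeatom : ∀ f : M →ₗ[R] N, f ≠ 0 → IsAtom (LinearMap.range f) :=
      fun f hf => hatomN _ (hprop f hf).2.2.1 (hprop f hf).2.2.2
    have hranS : ∀ f : M →ₗ[R] N, f ≠ 0 → IsSimpleModule R ↥(LinearMap.range f) :=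
      fun f hf => hF1' _ (hprop f hf).2.2.1 (hprop f hf).2.2.2
    have hfrkTopM : finrank K ↥(⊤ : Submodule R M) = finrank K M :=
      aux_frk_eq (Submodule.topEquiv (R := R) (M := M))
    have hfrkTopN : finrank K ↥(⊤ : Submodule R N) = finrank K N :=
      aux_frk_eq (Submodule.topEquiv (R := R) (M := N))
    by_cases hR : ∀ f g : M →ₗ[R] N, f ≠ 0 → g ≠ 0 → LinearMap.range f = LinearMap.range g
    · -- II-R2 : all nonzero maps share the same range B0
      have hallr : ∀ f : M →ₗ[R] N, LinearMap.range f ≤ LinearMap.range f₀ := by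
        intro f
        by_cases hf : f = 0
        · rw [hf]; simp
        · exact le_of_eq (hR f f₀ hf hf₀)
      have h1 : ∀ S : Submodule R M, IsAtom S → (↥(LinearMap.range f₀) ≃ₗ[R] ↥S) → False :=
        fun S hS e => aux_L3 hhomTop (LinearMap.range f₀) S e (hatom_ne_top S hS) hallr
      rcases eq_bot_or_exists_atom_le (LinearMap.ker f₀) with h | hex
      · exact absurd h (hprop f₀ hf₀).1
      obtain ⟨S, hSatom, hSC⟩ := hex
      haveI hSsimple : IsSimpleModule R ↥S := isSimpleModule_iff_isAtom.2 hSatom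
      obtain ⟨ψ, hψ0⟩ := hNonzeroHom S hSatom.1
      have hψinj : Function.Injective ψ := aux_simple_inj hψ0
      have eA : ↥S ≃ₗ[R] ↥(LinearMap.range ψ) := LinearEquiv.ofInjective ψ hψinj
      have hfrkAS : finrank K ↥(LinearMap.range ψ) = finrank K ↥S := (aux_frk_eq eA).symm
      have hfrkSC : finrank K ↥S ≤ finrank K ↥(LinearMap.ker f₀) := by
        rcases lt_or_eq_of_le hSC with h | h
        · exact le_of_lt (aux_finrank_lt_of_lt K h)
        · rw [h]
      have hfrkC : finrank K ↥(LinearMap.ker f₀) < finrank K M := by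
        rw [← hfrkTopM]
        exact aux_finrank_lt_of_lt K (lt_top_iff_ne_top.2 (hprop f₀ hf₀).2.1)
      have hAb : LinearMap.range ψ ≠ ⊥ := fun h => hψ0 (LinearMap.range_eq_bot.1 h)
      have hAt : LinearMap.range ψ ≠ ⊤ := by
        intro h
        rw [h, hfrkTopN] at hfrkAS
        omega
      by_cases hABeq : LinearMap.range ψ = LinearMap.range f₀
      · have eA' : ↥S ≃ₗ[R] ↥(LinearMap.range f₀) := by rw [← hABeq]; exact eA
        exact (h1 S hSatom eA'.symm).elim
      · have hc : IsCompl (LinearMap.range ψ) (LinearMap.range f₀) :=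
          hcomplN _ _ hAb hAt (hprop f₀ hf₀).2.2.1 (hprop f₀ hf₀).2.2.2 hABeq
        have hsum := aux_frk_compl K hc
        have hrn : finrank K ↥(LinearMap.range f₀) + finrank K ↥(LinearMap.ker f₀) =
            finrank K M := aux_rank_nullity K f₀
        have hSeq : S = LinearMap.ker f₀ := aux_eq_of_le_of_finrank K hSC (by omega)
        have hC0s : IsSimpleModule R ↥(LinearMap.ker f₀) := by rw [← hSeq]; exact hSsimple
        haveI hB0s : IsSimpleModule R ↥(LinearMap.range f₀) := hranS f₀ hf₀
        have hC0q : IsSimpleModule R (M ⧸ LinearMap.ker f₀) :=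
          IsSimpleModule.congr f₀.quotKerEquivRange
        have eA2 : ↥(LinearMap.range ψ) ≃ₗ[R] ↥(LinearMap.ker f₀) := by
          rw [← hSeq]; exact eA.symm
        exact finish2 (LinearMap.ker f₀) (LinearMap.range ψ) (LinearMap.range f₀)
          hC0s hC0q hc eA2 f₀.quotKerEquivRange.symm
    · -- II-R1 : two maps with distinct ranges
      push_neg at hR
      obtain ⟨f, g, hf0, hg0, hfgr⟩ := hR
      by_cases hkfg : LinearMap.ker f = LinearMap.ker g
      · -- same kernel Kk, distinct ranges
        have hc : IsCompl (LinearMap.range f) (LinearMap.range g) :=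
          hcomplN _ _ (hprop f hf0).2.2.1 (hprop f hf0).2.2.2
            (hprop g hg0).2.2.1 (hprop g hg0).2.2.2 hfgr
        have hrnf : finrank K ↥(LinearMap.range f) + finrank K ↥(LinearMap.ker f) =
            finrank K M := aux_rank_nullity K f
        have hrng : finrank K ↥(LinearMap.range g) + finrank K ↥(LinearMap.ker f) =
            finrank K M := by rw [hkfg]; exact aux_rank_nullity K g
        have hsum := aux_frk_compl K hc
        -- conclude all three dims are equal to d
        rcases eq_bot_or_exists_atom_le (LinearMap.ker f) with h | hex
        · exact absurd h (hprop f hf0).1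
        obtain ⟨S, hSatom, hSC⟩ := hex
        haveI hSsimple : IsSimpleModule R ↥S := isSimpleModule_iff_isAtom.2 hSatom
        obtain ⟨ψ, hψ0⟩ := hNonzeroHom S hSatom.1
        have hψinj : Function.Injective ψ := aux_simple_inj hψ0
        have eA : ↥S ≃ₗ[R] ↥(LinearMap.range ψ) := LinearEquiv.ofInjective ψ hψinj
        have hfrkAS : finrank K ↥(LinearMap.range ψ) = finrank K ↥S := (aux_frk_eq eA).symm
        have hfrkSC : finrank K ↥S ≤ finrank K ↥(LinearMap.ker f) := by
          rcases lt_or_eq_of_le hSC with h | h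
          · exact le_of_lt (aux_finrank_lt_of_lt K h)
          · rw [h]
        have hKkpos : 0 < finrank K ↥(LinearMap.ker f) := by
          haveI : Nontrivial ↥(LinearMap.ker f) := Submodule.nontrivial_iff_ne_bot.2 (hprop f hf0).1
          exact Module.finrank_pos_iff.mpr inferInstance
        have hAb : LinearMap.range ψ ≠ ⊥ := fun h => hψ0 (LinearMap.range_eq_bot.1 h)
        have hAt : LinearMap.range ψ ≠ ⊤ := by
          intro h
          rw [h, hfrkTopN] at hfrkAS
          omega
        -- frk A = d
        have hfrkAd : finrank K ↥(LinearMap.range ψ) = finrank K ↥(LinearMap.ker f) := by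
          by_cases hABf : LinearMap.range ψ = LinearMap.range f
          · rw [hABf]; omega
          · have hc2 : IsCompl (LinearMap.range ψ) (LinearMap.range f) :=
              hcomplN _ _ hAb hAt (hprop f hf0).2.2.1 (hprop f hf0).2.2.2 hABf
            have := aux_frk_compl K hc2
            omega
        have hSeq : S = LinearMap.ker f := aux_eq_of_le_of_finrank K hSC (by omega)
        have hKks : IsSimpleModule R ↥(LinearMap.ker f) := by rw [← hSeq]; exact hSsimple
        haveI hBfs : IsSimpleModule R ↥(LinearMap.range f) := hranS f hf0
        have hKkq : IsSimpleModule R (M ⧸ LinearMap.ker f) :=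
          IsSimpleModule.congr f.quotKerEquivRange
        have eA2 : ↥(LinearMap.range ψ) ≃ₗ[R] ↥(LinearMap.ker f) := by
          rw [← hSeq]; exact eA.symm
        have eg : (M ⧸ LinearMap.ker f) ≃ₗ[R] ↥(LinearMap.range g) := by
          rw [hkfg]; exact g.quotKerEquivRange
        by_cases hABf : LinearMap.range ψ = LinearMap.range f
        · -- pair with range g
          have hcAg : IsCompl (LinearMap.range ψ) (LinearMap.range g) := by
            rw [hABf]; exact hc
          exact finish2 (LinearMap.ker f) (LinearMap.range ψ) (LinearMap.range g)
            hKks hKkq hcAg eA2 eg.symm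
        · have hcAf : IsCompl (LinearMap.range ψ) (LinearMap.range f) :=
            hcomplN _ _ hAb hAt (hprop f hf0).2.2.1 (hprop f hf0).2.2.2 hABf
          exact finish2 (LinearMap.ker f) (LinearMap.range ψ) (LinearMap.range f)
            hKks hKkq hcAf eA2 f.quotKerEquivRange.symm
      · -- distinct kernels and distinct ranges : h = f + g
        have hdisjr : Disjoint (LinearMap.range f) (LinearMap.range g) :=
          aux_atom_disjoint (hrangeatom f hf0) (hrangeatom g hg0) hfgr
        have hne : f + g ≠ 0 := by
          intro h
          apply hfgr
          have hfe : f = -g := eq_neg_of_add_eq_zero_left (by rw [h])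
          rw [hfe]
          exact LinearMap.range_neg g
        have hkerh : LinearMap.ker (f + g) = LinearMap.ker f ⊓ LinearMap.ker g := by
          apply le_antisymm
          · intro m hm
            have hm' : f m + g m = 0 := hm
            have hfm : f m = -(g m) := eq_neg_of_add_eq_zero_left hm'
            have hfR : f m ∈ LinearMap.range f ⊓ LinearMap.range g :=
              Submodule.mem_inf.2 ⟨⟨m, rfl⟩, by rw [hfm]; exact neg_mem ⟨m, rfl⟩⟩
            rw [hdisjr.eq_bot] at hfR
            have hf0m : f m = 0 := hfR
            have hg0m : g m = 0 := by
              rw [hf0m] at hfm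
              simpa using hfm.symm
            exact Submodule.mem_inf.2 ⟨hf0m, hg0m⟩
          · intro m hm
            obtain ⟨h1, h2⟩ := Submodule.mem_inf.1 hm
            have h1' : f m = 0 := h1
            have h2' : g m = 0 := h2
            show f m + g m = 0
            rw [h1', h2', add_zero]
        by_cases hkh : LinearMap.ker (f + g) = ⊥
        · exact (hinj (f + g) (LinearMap.ker_eq_bot.1 hkh)).elim
        · exfalso
          haveI hrhs : IsSimpleModule R ↥(LinearMap.range (f + g)) := hranS (f + g) hne
          have hcoat : IsCoatom (LinearMap.ker (f + g)) :=
            isSimpleModule_iff_isCoatom.1 (IsSimpleModule.congr (f + g).quotKerEquivRange)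
          have hlef : LinearMap.ker (f + g) ≤ LinearMap.ker f := by
            rw [hkerh]; exact inf_le_left
          have hleg : LinearMap.ker (f + g) ≤ LinearMap.ker g := by
            rw [hkerh]; exact inf_le_right
          have heqf : LinearMap.ker (f + g) = LinearMap.ker f := by
            rcases lt_or_eq_of_le hlef with h | h
            · exact absurd (hcoat.2 _ h) (hprop f hf0).2.1
            · exact h
          have heqg : LinearMap.ker (f + g) = LinearMap.ker g := by
            rcases lt_or_eq_of_le hleg with h | h
            · exact absurd (hcoat.2 _ h) (hprop g hg0).2.1
            · exact h
          exact hkfg (heqf ▸ heqg)
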